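/- Let q = p^m with p an odd prime, a ∈ F_{q²} with a^{q+1} = −1, and L an n×n unitary matrix over F_{q²}. Suppose n ≢ 3 (mod p), δ = 1, γ ∈ F_{q²} satisfies γ^{q+1} = 1−n with 1−n ≠ 0 in F_{q²}, θ lies in the prime subfield F_p and satisfies (θ−2)²·n − (2θ²−4θ+4) = 0 in F_{q²}, β = 2, α = (2(1−n)−θ)·γ^{−q}, and λ = 0. Then the code generated by the bordered matrix G (with first row (θ, β,…,β, α, λ(L₁+⋯+Lₙ)) and (i+1)-st row (δ, (Jₙ−Iₙ)ᵢ, γ, aLᵢ)) is a Hermitian self-dual code of length 2n+2 and dimension n+1. -/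

import Mathlib

open Matrix BigOperators Finset

/-- The Hermitian inner product `x * y = ∑ i, x i * (y i)^q` over `F_{q²}`. -/
def hermInner (q : ℕ) {F : Type} [CommRing F] {ι : Type} [Fintype ι]
    (x y : ι → F) : F :=
  ∑ i, x i * y i ^ q

/-- The Hermitian dual of a set of vectors. -/
def hermDual (q : ℕ) {F : Type} [CommRing F] {ι : Type} [Fintype ι]
    (C : Set (ι → F)) : Set (ι → F) :=
  {y | ∀ x ∈ C, hermInner q x y = 0}

/-- The code generated by a matrix: the span of its rows. -/
def rowSpan {F : Type} [Field F] {k : ℕ} {ι : Type} (G : Matrix (Fin k) ι F) :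
    Submodule F (ι → F) :=
  Submodule.span F (Set.range fun i => G i)

section Aux

variable {F : Type} [Field F]

/-- `hermInner` as a linear map in the first argument. -/
def hermLin (q : ℕ) {ι : Type} [Fintype ι] (y : ι → F) : (ι → F) →ₗ[F] F where
  toFun x := hermInner q x y
  map_add' x₁ x₂ := by simp [hermInner, add_mul, Finset.sum_add_distrib]
  map_smul' c x := by simp [hermInner, Finset.mul_sum, mul_assoc]

lemma hermInner_expand {q n : ℕ} (x y : (Unit ⊕ Fin n) ⊕ (Unit ⊕ Fin n) → F) :
    hermInner q x y = x (Sum.inl (Sum.inl ())) * y (Sum.inl (Sum.inl ())) ^ q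
      + ∑ j, x (Sum.inl (Sum.inr j)) * y (Sum.inl (Sum.inr j)) ^ q
      + x (Sum.inr (Sum.inl ())) * y (Sum.inr (Sum.inl ())) ^ q
      + ∑ j, x (Sum.inr (Sum.inr j)) * y (Sum.inr (Sum.inr j)) ^ q := by
  rw [hermInner, Fintype.sum_sum_type, Fintype.sum_sum_type, Fintype.sum_sum_type]
  simp [Fintype.sum_unique]
  ring

lemma aux_indep {n : ℕ}
    (A : Matrix (Fin (n + 1)) ((Unit ⊕ Fin n) ⊕ (Unit ⊕ Fin n)) F)
    (b : F) (hb : b ≠ 0)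
    (L' B : Matrix (Fin n) (Fin n) F) (hLB : L' * B = 1)
    (h0 : A 0 ≠ 0)
    (hA0 : ∀ j, A 0 (Sum.inr (Sum.inr j)) = 0)
    (hAs : ∀ i j, A i.succ (Sum.inr (Sum.inr j)) = b * L' i j) :
    LinearIndependent F (fun i => A i) := by
  rw [Fintype.linearIndependent_iff]
  intro c hc
  have hcs : ∀ i : Fin n, c i.succ = 0 := by
    have hv : (fun i : Fin n => c i.succ * b) ᵥ* L' = 0 := by
      funext j
      have h1 := congrFun hc (Sum.inr (Sum.inr j))
      rw [Finset.sum_apply, Fin.sum_univ_succ] at h1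
      simp only [Pi.smul_apply, smul_eq_mul, hA0, hAs, mul_zero, zero_add, Pi.zero_apply] at h1
      simpa [Matrix.vecMul, dotProduct, mul_assoc] using h1
    have hz : (fun i : Fin n => c i.succ * b) = 0 := by
      calc (fun i : Fin n => c i.succ * b)
          = (fun i : Fin n => c i.succ * b) ᵥ* (L' * B) := by
            rw [hLB, Matrix.vecMul_one]
        _ = ((fun i : Fin n => c i.succ * b) ᵥ* L') ᵥ* B := (Matrix.vecMul_vecMul _ _ _).symm
        _ = 0 := by rw [hv, Matrix.zero_vecMul]
    intro i
    have := congrFun hz i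
    simp only [Pi.zero_apply, mul_eq_zero] at this
    exact this.resolve_right hb
  have h0' : c 0 • A 0 = 0 := by
    have h2 := hc
    rw [Fin.sum_univ_succ] at h2
    simpa [hcs] using h2
  rcases smul_eq_zero.mp h0' with h | h
  · intro i; exact Fin.cases h (fun i => hcs i) i
  · exact absurd h h0

lemma sum_ite_one {n : ℕ} (i : Fin n) :
    ∑ j, (if j = i then (0:F) else 1) = (n : F) - 1 := by
  have h : ∀ j : Fin n, (if j = i then (0:F) else 1) = 1 - (if j = i then 1 else 0) := by
    intro j; by_cases h1 : j = i <;> simp [h1]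
  simp_rw [h]
  rw [Finset.sum_sub_distrib, Finset.sum_const, Finset.sum_ite_eq' univ i (fun _ => (1:F))]
  simp [mul_comm]

lemma sum_ite_two {n : ℕ} (i i' : Fin n) :
    ∑ j, (if j = i then (0:F) else 1) * (if j = i' then 0 else 1)
      = (n : F) - 2 + (if i = i' then 1 else 0) := by
  have h : ∀ j : Fin n, (if j = i then (0:F) else 1) * (if j = i' then 0 else 1)
      = 1 - (if j = i then 1 else 0) - (if j = i' then 1 else 0)
        + (if j = i then (if j = i' then (1:F) else 0) else 0) := by
    intro j; by_cases h1 : j = i <;> by_cases h2 : j = i' <;> simp [h1, h2]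
  simp_rw [h]
  rw [Finset.sum_add_distrib, Finset.sum_sub_distrib, Finset.sum_sub_distrib,
    Finset.sum_const, Finset.sum_ite_eq' univ i (fun _ => (1:F)),
    Finset.sum_ite_eq' univ i' (fun _ => (1:F)),
    Finset.sum_ite_eq' univ i (fun j => if j = i' then (1:F) else 0)]
  simp [mul_comm]
  ring

end Aux

/-- Theorem 2, case 1) of the paper. With `p` odd, `n ≢ 3 (mod p)`,
`δ = 1`, `γ^{q+1} = 1 - n ≠ 0`, `θ ∈ F_p` with `(θ-2)²n - (2θ²-4θ+4) = 0`,
`β = 2`, `α = (2(1-n) - θ)·γ^{-q}`, `λ = 0`, the bordered matrix `G` generates a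
Hermitian self-dual code of length `2n+2` and dimension `n+1`. -/
theorem stmt11 (p m q n : ℕ) (hp : p.Prime) (hodd : Odd p) (hm : 0 < m)
    (hq : q = p ^ m) (hnp : (n : ZMod p) ≠ 3)
    (F : Type) [Field F] [Fintype F] (hF : Fintype.card F = q ^ 2)
    (a : F) (ha : a ^ (q + 1) = -1)
    (L : Matrix (Fin n) (Fin n) F) (hL : L * (L.map (· ^ q))ᵀ = 1)
    (α β γ δ lam θ : F)
    (hδ : δ = 1)
    (hγ : γ ^ (q + 1) = 1 - (n : F)) (hγ0 : (1 : F) - (n : F) ≠ 0)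
    (hθp : θ ^ p = θ)
    (hθ : (θ - 2) ^ 2 * (n : F) - (2 * θ ^ 2 - 4 * θ + 4) = 0)
    (hβ : β = 2)
    (hα : α = (2 * (1 - (n : F)) - θ) * (γ ^ q)⁻¹)
    (hlam : lam = 0)
    (G : Matrix (Fin (n + 1)) ((Unit ⊕ Fin n) ⊕ (Unit ⊕ Fin n)) F)
    (hG1 : G 0 (Sum.inl (Sum.inl ())) = θ)
    (hG2 : ∀ j, G 0 (Sum.inl (Sum.inr j)) = β)
    (hG3 : G 0 (Sum.inr (Sum.inl ())) = α)
    (hG4 : ∀ j, G 0 (Sum.inr (Sum.inr j)) = lam * ∑ k, L k j)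
    (hG5 : ∀ i : Fin n, G i.succ (Sum.inl (Sum.inl ())) = δ)
    (hG6 : ∀ i j : Fin n, G i.succ (Sum.inl (Sum.inr j)) = if j = i then 0 else 1)
    (hG7 : ∀ i : Fin n, G i.succ (Sum.inr (Sum.inl ())) = γ)
    (hG8 : ∀ i j : Fin n, G i.succ (Sum.inr (Sum.inr j)) = a * L i j) :
    (rowSpan G : Set ((Unit ⊕ Fin n) ⊕ (Unit ⊕ Fin n) → F)) = hermDual q (rowSpan G) ∧
    Module.finrank F (rowSpan G) = n + 1 := by
  classical
  subst hq hδ hβ hlam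
  haveI hfact : Fact p.Prime := ⟨hp⟩
  haveI hchar : CharP F p := by
    obtain ⟨r, hr⟩ := CharP.exists F
    haveI := hr
    obtain ⟨k, hpr, hcard⟩ := FiniteField.card F r
    have hrp : r = p := by
      have h1 : r ∣ p ^ (m * 2) := by
        rw [← pow_mul] at hF
        exact hF ▸ hcard ▸ dvd_pow_self r k.pos.ne'
      exact (Nat.prime_dvd_prime_iff_eq hpr hp).mp (hpr.dvd_of_dvd_pow h1)
    exact hrp ▸ hr
  have hp2 : p ≠ 2 := by
    rintro rfl
    exact absurd (Nat.odd_iff.mp hodd) (by norm_num)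
  have h2F : (2 : F) ≠ 0 := by
    intro h
    have h' : ((2 : ℕ) : F) = 0 := by exact_mod_cast h
    have := (CharP.cast_eq_zero_iff F p 2).mp h'
    exact hp2 ((Nat.prime_dvd_prime_iff_eq hp Nat.prime_two).mp this)
  set q := p ^ m with hq
  set φ : F →+* F := iterateFrobenius F p m with hφdef
  have hφ : ∀ x : F, φ x = x ^ q := fun x => rfl
  have hq0 : q ≠ 0 := pow_ne_zero m hp.pos.ne'
  have hqq : ∀ x : F, (x ^ q) ^ q = x := by
    intro x
    rw [← pow_mul, ← sq, ← hF]
    exact FiniteField.pow_card x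
  have hinj : Function.Injective φ := φ.injective
  have h2q : (2 : F) ^ q = 2 := by
    rw [← hφ]; exact_mod_cast map_natCast φ 2
  have hθq : θ ^ q = θ := by
    have key : ∀ k : ℕ, θ ^ p ^ k = θ := by
      intro k
      induction k with
      | zero => simp
      | succ k ih => rw [pow_succ, pow_mul, ih, hθp]
    exact key m
  have ha0 : a ≠ 0 := by
    intro h
    rw [h, zero_pow (Nat.succ_ne_zero q)] at ha
    exact absurd ha (by norm_num)
  have hγne : γ ≠ 0 := by
    intro h
    rw [h, zero_pow (Nat.succ_ne_zero q)] at hγ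
    exact hγ0 hγ.symm
  have hγqne : γ ^ q ≠ 0 := pow_ne_zero q hγne
  set c : F := 2 * (1 - (n : F)) - θ with hc
  have hcq : c ^ q = c := by
    rw [← hφ, hc]
    rw [_root_.map_sub, _root_.map_mul, _root_.map_sub, _root_.map_one, map_natCast, map_ofNat, hφ θ, hθq]
  have hαq : α ^ q = c * γ⁻¹ := by
    rw [hα, ← hφ, _root_.map_mul, map_inv₀, hφ c, hcq, hφ (γ ^ q), hqq]
  have haa : a * a ^ q = -1 := by
    rw [← ha, pow_succ]; ring
  have hγγ : γ * γ ^ q = 1 - (n : F) := by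
    rw [← hγ, pow_succ]; ring
  -- entrywise consequences of unitarity
  have hLe : ∀ i i' : Fin n, ∑ j, L i j * (L i' j) ^ q = if i = i' then 1 else 0 := by
    intro i i'
    have h1 := congrFun (congrFun hL i) i'
    simpa [Matrix.mul_apply, Matrix.one_apply, Matrix.transpose_apply, Matrix.map_apply] using h1
  have hLe2 : ∀ i i' : Fin n, ∑ j, (L i j) ^ q * L i' j = if i = i' then 1 else 0 := by
    intro i i'
    have h1 := congrArg φ (hLe i i')
    rw [map_sum, apply_ite φ, _root_.map_one, _root_.map_zero] at h1
    calc ∑ j, (L i j) ^ q * L i' j = ∑ j, φ (L i j * L i' j ^ q) := by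
          refine Finset.sum_congr rfl fun j _ => ?_
          rw [_root_.map_mul, hφ, hφ, hqq]
      _ = if i = i' then 1 else 0 := h1
  -- simplified row-entry facts
  have hG4' : ∀ j, G 0 (Sum.inr (Sum.inr j)) = 0 := by
    intro j; rw [hG4]; ring
  -- orthogonality of rows
  have hT4 : ∀ i i' : Fin n,
      ∑ j, (a * L i j) * (a * L i' j) ^ q = -(if i = i' then 1 else 0) := by
    intro i i'
    have h1 : ∀ j : Fin n, (a * L i j) * (a * L i' j) ^ q
        = (a * a ^ q) * (L i j * (L i' j) ^ q) := by
      intro j; rw [mul_pow]; ring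
    simp_rw [h1]
    rw [← Finset.mul_sum, hLe, haa, neg_one_mul]
  have horth : ∀ i i' : Fin (n + 1), hermInner q (G i) (G i') = 0 := by
    intro i i'
    induction i using Fin.cases with
    | zero =>
      induction i' using Fin.cases with
      | zero =>
        rw [hermInner_expand, hG1, hG3]
        simp only [hG2, hG4', h2q, hθq, zero_mul, zero_pow hq0, mul_zero,
          Finset.sum_const_zero, Fintype.card_fin, Finset.sum_const, nsmul_eq_mul,
          Finset.card_univ]
        rw [hαq, hα]
        have hkey : (c * (γ ^ q)⁻¹) * (c * γ⁻¹) = c ^ 2 * (1 - (n : F))⁻¹ := by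
          rw [← hγγ, mul_inv]
          ring
        rw [hkey]
        have hmain : θ * θ + (n : F) * (2 * 2) + c ^ 2 * (1 - (n : F))⁻¹ = 0 := by
          have h1 : (θ * θ + (n : F) * (2 * 2)) * (1 - (n : F)) + c ^ 2 = 0 := by
            rw [hc]; linear_combination -hθ
          field_simp
          linear_combination h1
        linear_combination hmain
      | succ i' =>
        rw [hermInner_expand, hG1, hG3, hG5, hG7]
        simp only [hG2, hG4', hG6, hG8, zero_mul, Finset.sum_const_zero,
          apply_ite (· ^ q), zero_pow hq0, one_pow]
        rw [← Finset.mul_sum, sum_ite_one, hα,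
          mul_assoc, inv_mul_cancel₀ hγqne, mul_one, hc]
        ring
    | succ i =>
      induction i' using Fin.cases with
      | zero =>
        rw [hermInner_expand, hG1, hG3, hG5, hG7]
        simp only [hG2, hG4', hG6, hG8, h2q, hθq, zero_pow hq0, mul_zero,
          Finset.sum_const_zero]
        rw [← Finset.sum_mul, sum_ite_one, hαq]
        have h3 : γ * (c * γ⁻¹) = c := by
          field_simp
        rw [h3, hc]; ring
      | succ i' =>
        rw [hermInner_expand, hG5, hG5, hG7, hG7]
        simp only [hG6, hG8, apply_ite (· ^ q), zero_pow hq0, one_pow]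
        rw [sum_ite_two, hT4, hγγ]
        ring
  -- the conjugate matrix
  set M : Matrix (Fin (n + 1)) ((Unit ⊕ Fin n) ⊕ (Unit ⊕ Fin n)) F
    := G.map (· ^ q) with hM
  have hrel : ∀ (y : (Unit ⊕ Fin n) ⊕ (Unit ⊕ Fin n) → F) (i : Fin (n + 1)),
      φ (M.mulVec y i) = hermInner q (G i) y := by
    intro y i
    rw [Matrix.mulVec, dotProduct, map_sum, hermInner]
    refine Finset.sum_congr rfl fun j _ => ?_
    rw [_root_.map_mul, hφ, hφ, hM, Matrix.map_apply, hqq]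
  have hrow_mem : ∀ i' : Fin (n + 1), M.mulVecLin (G i') = 0 := by
    intro i'
    funext i
    have h1 := horth i' i
    rw [hermInner] at h1
    simp only [Matrix.mulVecLin_apply, Pi.zero_apply]
    rw [Matrix.mulVec, dotProduct]
    calc ∑ x, M i x * G i' x = ∑ x, G i' x * (G i x) ^ q := by
          refine Finset.sum_congr rfl fun x _ => ?_
          rw [hM, Matrix.map_apply, mul_comm]
      _ = 0 := h1
  -- linear independence of the rows of G and M
  have hrow0_ne : ∀ v : (Unit ⊕ Fin n) ⊕ (Unit ⊕ Fin n) → F,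
      v (Sum.inl (Sum.inl ())) = θ → (∀ j, v (Sum.inl (Sum.inr j)) = 2) → v ≠ 0 := by
    intro v h1 h2 hv
    rcases Nat.eq_zero_or_pos n with hn | hn
    · have hθ0 : θ = 0 := by rw [← h1, hv]; rfl
      have hnF : (n : F) = 0 := by rw [hn]; simp
      rw [hθ0, hnF] at hθ
      have h4 : (2 : F) * 2 = 0 := by linear_combination -hθ
      rcases mul_eq_zero.mp h4 with h | h <;> exact h2F h
    · have := h2 ⟨0, hn⟩
      rw [hv] at this
      exact h2F (by simpa using this.symm)
  have hGind : LinearIndependent F (fun i => G i) := by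
    refine aux_indep G a ha0 L (L.map (· ^ q))ᵀ hL ?_ hG4' hG8
    exact hrow0_ne (G 0) hG1 hG2
  have hMind : LinearIndependent F (fun i => M i) := by
    refine aux_indep M (a ^ q) (pow_ne_zero q ha0) (L.map (· ^ q)) Lᵀ ?_ ?_ ?_ ?_
    · ext i i'
      simp only [Matrix.mul_apply, Matrix.map_apply, Matrix.transpose_apply, Matrix.one_apply]
      exact hLe2 i i'
    · refine hrow0_ne (M 0) ?_ ?_
      · rw [hM, Matrix.map_apply, hG1, hθq]
      · intro j; rw [hM, Matrix.map_apply, hG2, h2q]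
    · intro j; rw [hM, Matrix.map_apply, hG4', zero_pow hq0]
    · intro i j
      rw [hM, Matrix.map_apply, hG8, mul_pow, Matrix.map_apply]
  -- dimension count
  have hspan_rank : Module.finrank F (rowSpan G) = n + 1 := by
    rw [rowSpan, finrank_span_eq_card hGind]
    simp
  have hMrank : M.rank = n + 1 := by
    have h1 := LinearIndependent.rank_matrix (M := M) hMind
    simpa using h1
  have hker : Module.finrank F (LinearMap.ker M.mulVecLin) = n + 1 := by
    have h1 := LinearMap.finrank_range_add_finrank_ker M.mulVecLin
    have h2 : Module.finrank F ((Unit ⊕ Fin n) ⊕ (Unit ⊕ Fin n) → F) = (1 + n) + (1 + n) := by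
      rw [Module.finrank_pi]
      simp
    have h3 : Module.finrank F (LinearMap.range M.mulVecLin) = n + 1 := hMrank
    rw [h2, h3] at h1
    omega
  have hle : rowSpan G ≤ LinearMap.ker M.mulVecLin := by
    rw [rowSpan, Submodule.span_le]
    rintro _ ⟨i, rfl⟩
    simp only [SetLike.mem_coe, LinearMap.mem_ker]
    exact hrow_mem i
  have heq : rowSpan G = LinearMap.ker M.mulVecLin :=
    Submodule.eq_of_le_of_finrank_eq hle (by rw [hspan_rank, hker])
  have hdual_eq : hermDual q (rowSpan G : Set _)
      = ((LinearMap.ker M.mulVecLin : Submodule F _) :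
          Set ((Unit ⊕ Fin n) ⊕ (Unit ⊕ Fin n) → F)) := by
    ext y
    constructor
    · intro hy
      simp only [SetLike.mem_coe, LinearMap.mem_ker]
      have hz : ∀ i, M.mulVec y i = 0 := by
        intro i
        apply hinj
        rw [map_zero, hrel]
        exact hy (G i) (Submodule.subset_span ⟨i, rfl⟩)
      funext i
      simpa using hz i
    · intro hy x hx
      simp only [SetLike.mem_coe, LinearMap.mem_ker] at hy
      have hsub : rowSpan G ≤ LinearMap.ker (hermLin q y) := by
        rw [rowSpan, Submodule.span_le]
        rintro _ ⟨i, rfl⟩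
        simp only [SetLike.mem_coe, LinearMap.mem_ker]
        show hermInner q (G i) y = 0
        rw [← hrel y i]
        have hy' : M.mulVec y = 0 := by simpa using hy
        rw [hy']
        simp
      have := hsub hx
      exact this
  constructor
  · rw [hdual_eq, heq]
  · exact hspan_rank
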